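/- Let L be a nonnegative random variable whose cdf under measure P_∞ is continuous and strictly increasing on [0,∞), and suppose E_∞[L] = 1 and E_0[f(L)] is defined via a second measure P_0 with P_0(L < ν) = E_∞[L 1{L < ν}]. Then the function g(ν) = P_0(L < ν)/P_∞(L ≥ ν) is continuous and strictly increasing in ν on the set where P_∞(L ≥ ν) > 0, with g(0) = 0 and g(ν) → ∞ as ν → ∞; hence for every γ ≥ 1 the equation g(ν) = γ has a unique solution. -/

import Mathlib

open MeasureTheory Filter Set
open scoped ENNReal Topology

section aux
variable {Ω : Type*} [MeasurableSpace Ω] {μ : Measure Ω} {L : Ω → ℝ}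

/-- continuity of the cdf implies no atoms -/
lemma shw_atom [IsProbabilityMeasure μ] (hLm : Measurable L)
    (hcdf_cont : Continuous fun ν : ℝ => (μ {ω | L ω < ν}).toReal) (c : ℝ) :
    μ {ω | L ω = c} = 0 := by
  have hms : ∀ ν : ℝ, MeasurableSet {ω | L ω < ν} := fun ν => hLm measurableSet_Iio
  have hle : (μ {ω | L ω = c}).toReal ≤ 0 := by
    have htend : Tendsto (fun u : ℝ => (μ {ω | L ω < u}).toReal - (μ {ω | L ω < c}).toReal)
        (𝓝[>] c) (𝓝 0) := by
      have := ((hcdf_cont.tendsto c).mono_left (nhdsWithin_le_nhds (s := Ioi c)))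
      simpa using this.sub_const ((μ {ω | L ω < c}).toReal)
    refine ge_of_tendsto htend ?_
    filter_upwards [self_mem_nhdsWithin] with u (hu : c < u)
    have h1 : {ω | L ω = c} ∪ {ω | L ω < c} ⊆ {ω | L ω < u} := by
      rintro ω (h | h) <;> simp only [mem_setOf_eq] at *
      · exact h ▸ hu
      · exact h.trans hu
    have h2 : μ {ω | L ω = c} + μ {ω | L ω < c} ≤ μ {ω | L ω < u} := by
      rw [← measure_union ?_ (hms c)]
      · exact measure_mono h1
      · rintro s hs1 hs2 ω hω
        have h3 := hs1 hω; have h4 := hs2 hω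
        simp only [mem_setOf_eq] at h3 h4; exfalso; linarith
    have h5 := ENNReal.toReal_mono (measure_ne_top μ _) h2
    rw [ENNReal.toReal_add (measure_ne_top μ _) (measure_ne_top μ _)] at h5
    linarith
  have h0 : (μ {ω | L ω = c}).toReal = 0 := le_antisymm hle ENNReal.toReal_nonneg
  exact ((ENNReal.toReal_eq_zero_iff _).mp h0).resolve_right (measure_ne_top μ _)

end aux

section aux2
variable {Ω : Type*} [MeasurableSpace Ω] {μ : Measure Ω} {L : Ω → ℝ}

lemma shw_Ncont [IsProbabilityMeasure μ] (hLm : Measurable L) (hLpos : ∀ ω, 0 ≤ L ω)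
    (hLint : Integrable L μ)
    (hcdf_cont : Continuous fun ν : ℝ => (μ {ω | L ω < ν}).toReal) :
    Continuous fun ν : ℝ => ∫ ω in {ω | L ω < ν}, L ω ∂μ := by
  have hms : ∀ ν : ℝ, MeasurableSet {ω | L ω < ν} := fun ν => hLm measurableSet_Iio
  rw [continuous_iff_continuousAt]
  intro ν
  have key : Tendsto (fun u : ℝ => ∫ ω, ({ω | L ω < u}).indicator L ω ∂μ) (𝓝 ν)
      (𝓝 (∫ ω, ({ω | L ω < ν}).indicator L ω ∂μ)) := by
    apply tendsto_integral_filter_of_dominated_convergence L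
    · exact Eventually.of_forall fun u => (hLm.indicator (hms u)).aestronglyMeasurable
    · refine Eventually.of_forall fun u => Eventually.of_forall fun ω => ?_
      rw [Real.norm_eq_abs]
      by_cases h : ω ∈ {ω | L ω < u}
      · rw [Set.indicator_of_mem h, abs_of_nonneg (hLpos ω)]
      · rw [Set.indicator_of_notMem h, abs_zero]; exact hLpos ω
    · exact hLint
    · have hne : ∀ᵐ ω ∂μ, L ω ≠ ν := by
        rw [ae_iff]
        simpa using shw_atom hLm hcdf_cont ν
      filter_upwards [hne] with ω hω
      rcases lt_or_gt_of_ne hω with h | h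
      · have hmem : ω ∈ {ω | L ω < ν} := h
        rw [Set.indicator_of_mem hmem]
        refine tendsto_const_nhds.congr' ?_
        filter_upwards [eventually_gt_nhds h] with u hu
        exact (Set.indicator_of_mem (show ω ∈ {ω | L ω < u} from hu) L).symm
      · have hmem : ω ∉ {ω | L ω < ν} := by simp only [mem_setOf_eq, not_lt]; exact h.le
        rw [Set.indicator_of_notMem hmem]
        refine tendsto_const_nhds.congr' ?_
        filter_upwards [eventually_lt_nhds h] with u hu
        exact (Set.indicator_of_notMem (show ω ∉ {ω | L ω < u} by
          simp only [mem_setOf_eq, not_lt]; exact hu.le) L).symm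
  have heq : ∀ u : ℝ, ∫ ω, ({ω | L ω < u}).indicator L ω ∂μ = ∫ ω in {ω | L ω < u}, L ω ∂μ :=
    fun u => integral_indicator (hms u)
  simp only [ContinuousAt, heq] at key ⊢
  exact key

lemma shw_split (hLm : Measurable L) (hLint : Integrable L μ) {a b : ℝ} (hab : a ≤ b) :
    ∫ ω in {ω | L ω < b}, L ω ∂μ
      = (∫ ω in {ω | L ω < a}, L ω ∂μ) + ∫ ω in {ω | a ≤ L ω ∧ L ω < b}, L ω ∂μ := by
  have hu : {ω | L ω < b} = {ω | L ω < a} ∪ {ω | a ≤ L ω ∧ L ω < b} := by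
    ext ω; simp only [mem_setOf_eq, mem_union]
    constructor
    · intro h; rcases lt_or_ge (L ω) a with h' | h'
      · exact Or.inl h'
      · exact Or.inr ⟨h', h⟩
    · rintro (h | ⟨_, h⟩)
      · exact h.trans_le hab
      · exact h
  have hdisj : Disjoint {ω | L ω < a} {ω | a ≤ L ω ∧ L ω < b} := by
    rintro s hs1 hs2 ω hω
    have h1 := hs1 hω; have h2 := hs2 hω
    simp only [mem_setOf_eq] at h1 h2; exfalso; linarith [h2.1]
  have hmslice : MeasurableSet {ω | a ≤ L ω ∧ L ω < b} := by
    have : {ω | a ≤ L ω ∧ L ω < b} = L ⁻¹' (Set.Ico a b) := rfl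
    rw [this]; exact hLm measurableSet_Ico
  rw [hu, setIntegral_union hdisj hmslice hLint.integrableOn hLint.integrableOn]
end aux2

section aux3
variable {Ω : Type*} [MeasurableSpace Ω] {μ : Measure Ω} {L : Ω → ℝ}

lemma shw_slice_pos [IsProbabilityMeasure μ] (hLm : Measurable L) (hLpos : ∀ ω, 0 ≤ L ω)
    (hLint : Integrable L μ)
    (hcdf_cont : Continuous fun ν : ℝ => (μ {ω | L ω < ν}).toReal)
    (hcdf_mono : StrictMonoOn (fun ν : ℝ => (μ {ω | L ω < ν}).toReal) (Set.Ici (0 : ℝ)))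
    {a b : ℝ} (ha : 0 ≤ a) (hab : a < b) :
    0 < ∫ ω in {ω | a ≤ L ω ∧ L ω < b}, L ω ∂μ := by
  have hslice_pos : 0 < μ {ω | a ≤ L ω ∧ L ω < b} := by
    rcases eq_or_ne (μ {ω | a ≤ L ω ∧ L ω < b}) 0 with h0 | h0
    · exfalso
      have hsub : {ω | L ω < b} ⊆ {ω | L ω < a} ∪ {ω | a ≤ L ω ∧ L ω < b} := by
        intro ω h; simp only [mem_setOf_eq, mem_union] at *
        rcases lt_or_ge (L ω) a with h' | h'
        · exact Or.inl h'
        · exact Or.inr ⟨h', h⟩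
      have : μ {ω | L ω < b} ≤ μ {ω | L ω < a} := by
        calc μ {ω | L ω < b} ≤ μ {ω | L ω < a} + μ {ω | a ≤ L ω ∧ L ω < b} :=
              (measure_mono hsub).trans (measure_union_le _ _)
          _ = μ {ω | L ω < a} := by rw [h0, add_zero]
      have h2 := ENNReal.toReal_mono (measure_ne_top μ _) this
      have h3 := hcdf_mono ha (ha.trans hab.le) hab
      simp only at h2 h3; linarith
    · exact h0.bot_lt
  have hnonneg : 0 ≤ᶠ[ae (μ.restrict {ω | a ≤ L ω ∧ L ω < b})] L :=
    Eventually.of_forall hLpos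
  rw [setIntegral_pos_iff_support_of_nonneg_ae hnonneg hLint.integrableOn]
  have hcover : {ω | a ≤ L ω ∧ L ω < b}
      ⊆ (Function.support L ∩ {ω | a ≤ L ω ∧ L ω < b}) ∪ {ω | L ω = 0} := by
    intro ω h
    rcases eq_or_ne (L ω) 0 with h0 | h0
    · exact Or.inr h0
    · exact Or.inl ⟨h0, h⟩
  have h4 : μ {ω | a ≤ L ω ∧ L ω < b}
      ≤ μ (Function.support L ∩ {ω | a ≤ L ω ∧ L ω < b}) := by
    calc μ {ω | a ≤ L ω ∧ L ω < b}
        ≤ μ (Function.support L ∩ {ω | a ≤ L ω ∧ L ω < b}) + μ {ω | L ω = 0} :=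
          (measure_mono hcover).trans (measure_union_le _ _)
      _ = _ := by rw [shw_atom hLm hcdf_cont 0, add_zero]
  exact lt_of_lt_of_le hslice_pos h4
end aux3


/-- Properties of `g(ν) = P_0(L < ν)/P_∞(L ≥ ν)` where `L` is a nonnegative likelihood
ratio with `E_∞[L] = 1` and `P_0(L < ν) = E_∞[L 1{L < ν}]`: `g` vanishes at `0`, is
continuous and strictly increasing on the relevant set, tends to `∞`, and for each
`γ ≥ 1` the equation `g(ν) = γ` has a unique solution. -/
theorem shewhart_ratio_threshold {Ω : Type*} [MeasurableSpace Ω] (μ : Measure Ω)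
    [IsProbabilityMeasure μ] (L : Ω → ℝ) (hLm : Measurable L) (hLpos : ∀ ω, 0 ≤ L ω)
    (hLint : Integrable L μ) (hL1 : ∫ ω, L ω ∂μ = 1)
    (hcdf_cont : Continuous fun ν : ℝ => (μ {ω | L ω < ν}).toReal)
    (hcdf_mono : StrictMonoOn (fun ν : ℝ => (μ {ω | L ω < ν}).toReal) (Set.Ici (0 : ℝ))) :
    (fun ν : ℝ => (∫ ω in {ω | L ω < ν}, L ω ∂μ) / (μ {ω | ν ≤ L ω}).toReal) 0 = 0 ∧
    StrictMonoOn (fun ν : ℝ => (∫ ω in {ω | L ω < ν}, L ω ∂μ) / (μ {ω | ν ≤ L ω}).toReal)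
      {ν : ℝ | 0 ≤ ν ∧ μ {ω | ν ≤ L ω} ≠ 0} ∧
    ContinuousOn (fun ν : ℝ => (∫ ω in {ω | L ω < ν}, L ω ∂μ) / (μ {ω | ν ≤ L ω}).toReal)
      {ν : ℝ | 0 ≤ ν ∧ μ {ω | ν ≤ L ω} ≠ 0} ∧
    Filter.Tendsto
      (fun ν : ℝ => (∫ ω in {ω | L ω < ν}, L ω ∂μ) / (μ {ω | ν ≤ L ω}).toReal)
      Filter.atTop Filter.atTop ∧
    ∀ γ : ℝ, 1 ≤ γ →
      ∃! ν : ℝ, 0 ≤ ν ∧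
        (∫ ω in {ω | L ω < ν}, L ω ∂μ) / (μ {ω | ν ≤ L ω}).toReal = γ := by
  set g : ℝ → ℝ :=
    fun ν : ℝ => (∫ ω in {ω | L ω < ν}, L ω ∂μ) / (μ {ω | ν ≤ L ω}).toReal with hgdef
  have hms : ∀ ν : ℝ, MeasurableSet {ω | L ω < ν} := fun ν => hLm measurableSet_Iio
  have hcompl : ∀ ν : ℝ, {ω | ν ≤ L ω} = {ω | L ω < ν}ᶜ := by
    intro ν; ext ω; simp [not_lt]
  have hFD : ∀ ν : ℝ, (μ {ω | ν ≤ L ω}).toReal = 1 - (μ {ω | L ω < ν}).toReal := by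
    intro ν
    rw [hcompl, measure_compl (hms ν) (measure_ne_top μ _), measure_univ,
      ENNReal.toReal_sub_of_le prob_le_one ENNReal.one_ne_top, ENNReal.toReal_one]
  have hFle : ∀ ν : ℝ, (μ {ω | L ω < ν}).toReal ≤ 1 := fun ν => by
    simpa using ENNReal.toReal_mono ENNReal.one_ne_top prob_le_one
  have hDpos : ∀ ν : ℝ, 0 ≤ ν → 0 < (μ {ω | ν ≤ L ω}).toReal := by
    intro ν hν
    rw [hFD]
    have h1 : (μ {ω | L ω < ν}).toReal < (μ {ω | L ω < ν + 1}).toReal :=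
      hcdf_mono hν (by simp only [Set.mem_Ici]; linarith) (lt_add_one ν)
    have h2 := hFle (ν + 1)
    linarith
  have hN0 : (∫ ω in {ω | L ω < (0:ℝ)}, L ω ∂μ) = 0 := by
    have he : {ω | L ω < (0:ℝ)} = ∅ := by
      ext ω; simp only [mem_setOf_eq, mem_empty_iff_false, iff_false, not_lt]
      exact hLpos ω
    rw [he, Measure.restrict_empty, integral_zero_measure]
  have hNnonneg : ∀ ν : ℝ, 0 ≤ ∫ ω in {ω | L ω < ν}, L ω ∂μ := fun ν =>
    setIntegral_nonneg (hms ν) fun ω _ => hLpos ω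
  have hNmono : ∀ a b : ℝ, a ≤ b →
      (∫ ω in {ω | L ω < a}, L ω ∂μ) ≤ ∫ ω in {ω | L ω < b}, L ω ∂μ := fun a b hab =>
    setIntegral_mono_set hLint.integrableOn (Eventually.of_forall hLpos)
      (HasSubset.Subset.eventuallyLE fun ω h => lt_of_lt_of_le h hab)
  have hNlt : ∀ a b : ℝ, 0 ≤ a → a < b →
      (∫ ω in {ω | L ω < a}, L ω ∂μ) < ∫ ω in {ω | L ω < b}, L ω ∂μ := by
    intro a b ha hab
    rw [shw_split hLm hLint hab.le]
    have := shw_slice_pos hLm hLpos hLint hcdf_cont hcdf_mono ha hab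
    linarith
  have hS : ∀ ν : ℝ, 0 ≤ ν → ν ∈ {ν : ℝ | 0 ≤ ν ∧ μ {ω | ν ≤ L ω} ≠ 0} := by
    intro ν hν
    refine ⟨hν, fun h0 => ?_⟩
    have := hDpos ν hν
    rw [h0] at this
    simp at this
  have hg0 : g 0 = 0 := by rw [hgdef]; simp only; rw [hN0, zero_div]
  have hstrict : StrictMonoOn g {ν : ℝ | 0 ≤ ν ∧ μ {ω | ν ≤ L ω} ≠ 0} := by
    intro a ha b hb hab
    have hDb := hDpos b (ha.1.trans hab.le)
    have hDba : (μ {ω | b ≤ L ω}).toReal < (μ {ω | a ≤ L ω}).toReal := by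
      rw [hFD, hFD]
      have : (μ {ω | L ω < a}).toReal < (μ {ω | L ω < b}).toReal :=
        hcdf_mono ha.1 (ha.1.trans hab.le) hab
      linarith
    have hNa := hNnonneg a
    have hNab := hNlt a b ha.1 hab
    calc g a = (∫ ω in {ω | L ω < a}, L ω ∂μ) / (μ {ω | a ≤ L ω}).toReal := rfl
      _ ≤ (∫ ω in {ω | L ω < a}, L ω ∂μ) / (μ {ω | b ≤ L ω}).toReal :=
          div_le_div_of_nonneg_left hNa hDb hDba.le
      _ < (∫ ω in {ω | L ω < b}, L ω ∂μ) / (μ {ω | b ≤ L ω}).toReal := by gcongr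
      _ = g b := rfl
  have hDcont : Continuous fun ν : ℝ => (μ {ω | ν ≤ L ω}).toReal := by
    have heq : (fun ν : ℝ => (μ {ω | ν ≤ L ω}).toReal)
        = fun ν : ℝ => 1 - (μ {ω | L ω < ν}).toReal := funext hFD
    rw [heq]; exact continuous_const.sub hcdf_cont
  have hgcont : ContinuousOn g {ν : ℝ | 0 ≤ ν ∧ μ {ω | ν ≤ L ω} ≠ 0} :=
    ((shw_Ncont hLm hLpos hLint hcdf_cont).continuousOn).div hDcont.continuousOn
      fun ν hν => (hDpos ν hν.1).ne'
  have hDtend : Tendsto (fun ν : ℝ => (μ {ω | ν ≤ L ω}).toReal) atTop (𝓝 0) := by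
    have h1 : Tendsto (fun ν : ℝ => μ {ω | ν ≤ L ω}) atTop
        (𝓝 (μ (⋂ ν : ℝ, {ω | ν ≤ L ω}))) := by
      apply tendsto_measure_iInter_atTop
        (fun ν => (hLm measurableSet_Ici).nullMeasurableSet)
        (fun a b hab ω hω => le_trans hab hω) ⟨0, measure_ne_top μ _⟩
    have h2 : (⋂ ν : ℝ, {ω | ν ≤ L ω}) = ∅ := by
      ext ω
      simp only [mem_iInter, mem_setOf_eq, mem_empty_iff_false, iff_false, not_forall, not_le]
      exact ⟨L ω + 1, by linarith⟩
    rw [h2, measure_empty] at h1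
    have h3 := (ENNReal.tendsto_toReal (a := 0) (by simp)).comp h1
    simpa [Function.comp_def] using h3
  have hgtop : Tendsto g atTop atTop := by
    rw [tendsto_atTop]
    intro b
    have hb'pos : (0:ℝ) < max b 1 := lt_of_lt_of_le one_pos (le_max_right b 1)
    have hc : 0 < ∫ ω in {ω | L ω < (1:ℝ)}, L ω ∂μ := by
      have := hNlt 0 1 le_rfl one_pos
      linarith [hN0]
    have hev : ∀ᶠ ν in atTop, (μ {ω | ν ≤ L ω}).toReal
        < (∫ ω in {ω | L ω < (1:ℝ)}, L ω ∂μ) / max b 1 :=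
      hDtend.eventually (eventually_lt_nhds (by positivity))
    filter_upwards [hev, eventually_ge_atTop (1:ℝ)] with ν hν1 hν2
    have hDν := hDpos ν (by linarith)
    have h3 : (∫ ω in {ω | L ω < (1:ℝ)}, L ω ∂μ) ≤ ∫ ω in {ω | L ω < ν}, L ω ∂μ :=
      hNmono 1 ν hν2
    have h4 : max b 1 < (∫ ω in {ω | L ω < (1:ℝ)}, L ω ∂μ) / (μ {ω | ν ≤ L ω}).toReal := by
      rw [lt_div_iff₀ hDν]
      calc max b 1 * (μ {ω | ν ≤ L ω}).toReal
          < max b 1 * ((∫ ω in {ω | L ω < (1:ℝ)}, L ω ∂μ) / max b 1) :=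
            mul_lt_mul_of_pos_left hν1 hb'pos
        _ = ∫ ω in {ω | L ω < (1:ℝ)}, L ω ∂μ := mul_div_cancel₀ _ hb'pos.ne'
    have h5 : (∫ ω in {ω | L ω < (1:ℝ)}, L ω ∂μ) / (μ {ω | ν ≤ L ω}).toReal ≤ g ν := by
      show _ ≤ (∫ ω in {ω | L ω < ν}, L ω ∂μ) / (μ {ω | ν ≤ L ω}).toReal
      gcongr
    calc b ≤ max b 1 := le_max_left _ _
      _ ≤ g ν := (h4.trans_le h5).le
  refine ⟨hg0, hstrict, hgcont, hgtop, ?_⟩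
  intro γ hγ
  obtain ⟨M, hM, hM0⟩ := ((hgtop.eventually (eventually_ge_atTop γ)).and
    (eventually_ge_atTop (0:ℝ))).exists
  have hsub : Icc (0:ℝ) M ⊆ {ν : ℝ | 0 ≤ ν ∧ μ {ω | ν ≤ L ω} ≠ 0} :=
    fun x hx => hS x hx.1
  have hivt := intermediate_value_Icc hM0 (hgcont.mono hsub)
  have hγmem : γ ∈ Icc (g 0) (g M) := ⟨by rw [hg0]; linarith, hM⟩
  obtain ⟨ν, hνmem, hνeq⟩ := hivt hγmem
  refine ⟨ν, ⟨hνmem.1, hνeq⟩, ?_⟩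
  intro y hy
  exact hstrict.injOn (hS y hy.1) (hS ν hνmem.1) (by rw [show g y = γ from hy.2, hνeq])
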